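/- Let a < b be reals, Σ > 0, μ^c = (a+b)/2, and define F(μ) = ∫_a^b N(ξ|μ,Σ) dξ. Then: (i) F(2μ^c − μ) = F(μ) for all μ ∈ ℝ (symmetry about μ^c); (ii) F is strictly increasing on (−∞, μ^c] and strictly decreasing on [μ^c, ∞); (iii) consequently, for any μ, μ' ∈ ℝ with |μ' − μ^c| ≤ |μ − μ^c|, it holds that F(μ) ≤ F(μ'). -/

import Mathlib

open MeasureTheory Real Set

/-- One-dimensional Gaussian density `N(ξ|μ,v) = (2πv)^{-1/2} exp(−(ξ−μ)²/(2v))`. -/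
noncomputable def gaussPDF (μ v ξ : ℝ) : ℝ :=
  (Real.sqrt (2 * Real.pi * v))⁻¹ * Real.exp (-((ξ - μ) ^ 2) / (2 * v))

noncomputable def gphi (v t : ℝ) : ℝ :=
  (Real.sqrt (2 * Real.pi * v))⁻¹ * Real.exp (-(t ^ 2) / (2 * v))

lemma gphi_cont (v : ℝ) : Continuous (gphi v) := by
  unfold gphi; fun_prop

lemma gphi_even (v t : ℝ) : gphi v (-t) = gphi v t := by
  simp [gphi, neg_pow]

lemma gphi_lt (v : ℝ) (hv : 0 < v) {s t : ℝ} (h : t ^ 2 < s ^ 2) :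
    gphi v s < gphi v t := by
  have hc : 0 < (Real.sqrt (2 * Real.pi * v))⁻¹ := by
    have : 0 < 2 * Real.pi * v := by positivity
    positivity
  have : Real.exp (-(s ^ 2) / (2 * v)) < Real.exp (-(t ^ 2) / (2 * v)) := by
    apply Real.exp_lt_exp.2
    apply div_lt_div_of_pos_right (by linarith) (by linarith)
  exact mul_lt_mul_of_pos_left this hc

noncomputable def Gv (v x : ℝ) : ℝ := ∫ t in (0:ℝ)..x, gphi v t

lemma Gv_hasDerivAt (v x : ℝ) : HasDerivAt (Gv v) (gphi v x) x :=
  (intervalIntegral.integral_hasStrictDerivAt_right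
    ((gphi_cont v).intervalIntegrable 0 x)
    ((gphi_cont v).stronglyMeasurableAtFilter _ _)
    (gphi_cont v).continuousAt).hasDerivAt

lemma Gv_odd (v x : ℝ) : Gv v (-x) = - Gv v x := by
  have h1 : Gv v x = ∫ t in (0:ℝ)..x, gphi v (-t) := by
    unfold Gv; congr 1; ext t; rw [gphi_even]
  rw [h1, intervalIntegral.integral_comp_neg, neg_zero,
    intervalIntegral.integral_symm]
  simp [Gv]

lemma F_eq (a b v μ : ℝ) (hab : a ≤ b) :
    (∫ ξ in Set.Icc a b, gaussPDF μ v ξ) = Gv v (b - μ) - Gv v (a - μ) := by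
  have h1 : (∫ ξ in Set.Icc a b, gaussPDF μ v ξ) = ∫ ξ in a..b, gphi v (ξ - μ) := by
    rw [MeasureTheory.integral_Icc_eq_integral_Ioc,
      ← intervalIntegral.integral_of_le hab]
    rfl
  rw [h1, intervalIntegral.integral_comp_sub_right, Gv, Gv,
    intervalIntegral.integral_interval_sub_left
      ((gphi_cont v).intervalIntegrable _ _) ((gphi_cont v).intervalIntegrable _ _)]

lemma F_hasDerivAt (a b v μ : ℝ) :
    HasDerivAt (fun μ : ℝ => Gv v (b - μ) - Gv v (a - μ))
      (gphi v (a - μ) - gphi v (b - μ)) μ := by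
  have hb : HasDerivAt (fun μ : ℝ => Gv v (b - μ)) (-gphi v (b - μ)) μ := by
    have := (Gv_hasDerivAt v (b - μ)).comp μ ((hasDerivAt_id μ).const_sub b)
    simpa [Function.comp_def] using this
  have ha : HasDerivAt (fun μ : ℝ => Gv v (a - μ)) (-gphi v (a - μ)) μ := by
    have := (Gv_hasDerivAt v (a - μ)).comp μ ((hasDerivAt_id μ).const_sub a)
    simpa [Function.comp_def] using this
  have h := hb.sub ha
  rw [show gphi v (a - μ) - gphi v (b - μ) = -gphi v (b - μ) - -gphi v (a - μ) by ring]
  exact h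

/-- The Gaussian box probability `F(μ) = ∫_a^b N(ξ|μ,v) dξ` as a function of the mean:
(i) it is symmetric about the midpoint `μc = (a+b)/2`;
(ii) strictly increasing on `(−∞, μc]` and strictly decreasing on `[μc, ∞)`;
(iii) hence `|μ' − μc| ≤ |μ − μc|` implies `F(μ) ≤ F(μ')`. -/
theorem gaussian_box_probability_mean (a b v : ℝ) (hab : a < b) (hv : 0 < v) :
    let μc := (a + b) / 2
    let F := fun μ : ℝ => ∫ ξ in Set.Icc a b, gaussPDF μ v ξ
    (∀ μ : ℝ, F (2 * μc - μ) = F μ) ∧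
    StrictMonoOn F (Set.Iic μc) ∧
    StrictAntiOn F (Set.Ici μc) ∧
    (∀ μ μ' : ℝ, |μ' - μc| ≤ |μ - μc| → F μ ≤ F μ') := by
  intro μc F
  have hFfun : F = fun μ : ℝ => Gv v (b - μ) - Gv v (a - μ) :=
    funext fun μ => F_eq a b v μ hab.le
  have hderiv : ∀ μ : ℝ, HasDerivAt F (gphi v (a - μ) - gphi v (b - μ)) μ := by
    intro μ; rw [hFfun]; exact F_hasDerivAt a b v μ
  have hcont : Continuous F :=
    continuous_iff_continuousAt.2 fun μ => (hderiv μ).continuousAt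
  have hsym : ∀ μ : ℝ, F (2 * μc - μ) = F μ := by
    intro μ
    rw [hFfun]
    have h1 : b - (2 * μc - μ) = -(a - μ) := by simp only [μc]; ring
    have h2 : a - (2 * μc - μ) = -(b - μ) := by simp only [μc]; ring
    simp only [h1, h2, Gv_odd]
    ring
  have hmono : StrictMonoOn F (Set.Iic μc) := by
    apply strictMonoOn_of_deriv_pos (convex_Iic μc) hcont.continuousOn
    intro x hx
    rw [interior_Iic] at hx
    rw [(hderiv x).deriv]
    have hx' : x < μc := hx
    have hsq : (a - x) ^ 2 < (b - x) ^ 2 := by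
      have : 2 * x < a + b := by simp only [μc] at hx'; linarith
      nlinarith
    linarith [gphi_lt v hv hsq]
  have hanti : StrictAntiOn F (Set.Ici μc) := by
    apply strictAntiOn_of_deriv_neg (convex_Ici μc) hcont.continuousOn
    intro x hx
    rw [interior_Ici] at hx
    rw [(hderiv x).deriv]
    have hx' : μc < x := hx
    have hsq : (b - x) ^ 2 < (a - x) ^ 2 := by
      have : a + b < 2 * x := by simp only [μc] at hx'; linarith
      nlinarith
    linarith [gphi_lt v hv hsq]
  refine ⟨hsym, hmono, hanti, ?_⟩
  intro μ μ' h
  have key : ∀ ν : ℝ, F ν = F (μc - |ν - μc|) := by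
    intro ν
    rcases le_total ν μc with hle | hge
    · rw [abs_of_nonpos (by linarith)]; ring_nf
    · rw [abs_of_nonneg (by linarith)]
      have : μc - (ν - μc) = 2 * μc - ν := by ring
      rw [this, hsym]
  rw [key μ, key μ']
  exact hmono.monotoneOn (by simp [abs_nonneg]) (by simp [abs_nonneg])
    (by linarith)
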